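/- For k = 1, the quantities p_1^S(n,m) for 0 ≤ n ≤ m ≤ 2 take the values: p_1^S(0,0) = 1/2, p_1^S(0,1) = 3/4, p_1^S(0,2) = 1/2, p_1^S(1,1) = 1/2, p_1^S(1,2) = 1/2, and p_1^S(2,2) = 0. -/

import Mathlib

open MeasureTheory ENNReal
open scoped Classical

/-- A configuration: a coloring of `ℤ` with the two colors coded by `Bool`. -/
abbrev Config := ℤ → Bool

/-- A site `x` is unstable in `η` iff it lies in a monochromatic chain of length (at least) 3,
i.e. there is `y ∈ {x-2, x-1, x}` with `η y = η (y+1) = η (y+2)`. Spelled out explicitly. -/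
def Unstable (η : Config) (x : ℤ) : Prop :=
  (η (x - 2) = η (x - 1) ∧ η (x - 1) = η x) ∨
  (η (x - 1) = η x ∧ η x = η (x + 1)) ∨
  (η x = η (x + 1) ∧ η (x + 1) = η (x + 2))

instance (η : Config) (x : ℤ) : Decidable (Unstable η x) := by
  unfold Unstable; infer_instance

/-- One step of the dynamics: stable sites keep their color, unstable ones are recolored
using the fresh colors `c`. -/
def update (η : Config) (c : ℤ → Bool) : Config :=
  fun x => if Unstable η x then c x else η x

/-- `evolve ω η k = R^k(η)`: the configuration after `k` steps, where the simultaneous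
recoloring at step `j` uses the fresh colors `ω j`. -/
def evolve (ω : ℕ → ℤ → Bool) (η : Config) : ℕ → Config
  | 0 => η
  | k + 1 => update (evolve ω η k) (ω k)

/-- `μ` makes the coordinates of the coin field i.i.d. uniform on the two colors:
every finite cylinder event has probability `(1/2)^(number of coordinates)`. -/
def IIDCoins (μ : Measure (ℕ → ℤ → Bool)) : Prop :=
  ∀ (S : Finset (ℕ × ℤ)) (f : ℕ × ℤ → Bool),
    μ {ω | ∀ p ∈ S, ω p.1 p.2 = f p} = (1 / 2 : ℝ≥0∞) ^ S.card

/-- The number of unstable sites of a configuration. -/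
noncomputable def numUnstable (η : Config) : ℕ∞ := {x : ℤ | Unstable η x}.encard

/-- `p_k^I`: sup over configurations `η` with site `0` unstable of `P(σ_{R^k(η)}(0) = 0)`. -/
noncomputable def pI (μ : Measure (ℕ → ℤ → Bool)) (k : ℕ) : ℝ≥0∞ :=
  ⨆ (η : Config) (_ : Unstable η 0), μ {ω | Unstable (evolve ω η k) 0}

/-- `p_k^{III}`: sup over configurations `η` with sites `-1, 0, 1` all unstable of
`P(σ_{R^k(η)}(0) = 0)`. -/
noncomputable def pIII (μ : Measure (ℕ → ℤ → Bool)) (k : ℕ) : ℝ≥0∞ :=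
  ⨆ (η : Config) (_ : Unstable η (-1) ∧ Unstable η 0 ∧ Unstable η 1),
    μ {ω | Unstable (evolve ω η k) 0}

/-- The conditioning event of `p_k^S(n,m)` (at site `0`): all sites `i` with `-n ≤ i ≤ m`
are stable, and the boundary sites `-n-1` (if `n` is finite) and `m+1` (if `m` is finite)
are unstable.  The inequality `-n ≤ i ≤ m` in `ℕ∞` is coded using `Int.toNat`. -/
def SWindow (η : Config) (n m : ℕ∞) : Prop :=
  (∀ i : ℤ, (((-i).toNat : ℕ∞) ≤ n) → ((i.toNat : ℕ∞) ≤ m) → ¬ Unstable η i) ∧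
  (∀ nn : ℕ, n = (nn : ℕ∞) → Unstable η (-(nn : ℤ) - 1)) ∧
  (∀ mm : ℕ, m = (mm : ℕ∞) → Unstable η ((mm : ℤ) + 1))

/-- `p_k^S(n,m)` for `n, m ∈ ℕ ∪ {∞}`: sup over configurations `η` satisfying the stable-window
condition of `P(σ_{R^k(η)}(0) = 0)`. -/
noncomputable def pS (μ : Measure (ℕ → ℤ → Bool)) (k : ℕ) (n m : ℕ∞) : ℝ≥0∞ :=
  ⨆ (η : Config) (_ : SWindow η n m), μ {ω | Unstable (evolve ω η k) 0}
variable {μ : Measure (ℕ → ℤ → Bool)}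

lemma meas_eq (z : ℤ) (v : Bool) : MeasurableSet {ω : ℕ → ℤ → Bool | ω 0 z = v} := by
  have h : Measurable fun ω : ℕ → ℤ → Bool => ω 0 z :=
    (measurable_pi_apply z).comp (measurable_pi_apply 0)
  exact h (measurableSet_singleton v)

lemma meas2 (z1 z2 : ℤ) (v1 v2 : Bool) :
    MeasurableSet {ω : ℕ → ℤ → Bool | ω 0 z1 = v1 ∧ ω 0 z2 = v2} :=
  (meas_eq z1 v1).inter (meas_eq z2 v2)

lemma meas3 (z1 z2 z3 : ℤ) (v1 v2 v3 : Bool) :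
    MeasurableSet {ω : ℕ → ℤ → Bool | ω 0 z1 = v1 ∧ ω 0 z2 = v2 ∧ ω 0 z3 = v3} :=
  (meas_eq z1 v1).inter ((meas_eq z2 v2).inter (meas_eq z3 v3))

lemma cyl1 (hμ : IIDCoins μ) (z : ℤ) (v : Bool) :
    μ {ω | ω 0 z = v} = 1 / 2 := by
  have := hμ {(0, z)} (fun _ => v)
  simpa using this

lemma cyl2 (hμ : IIDCoins μ) {z1 z2 : ℤ} (h : z1 ≠ z2) (v1 v2 : Bool) :
    μ {ω | ω 0 z1 = v1 ∧ ω 0 z2 = v2} = 1 / 4 := by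
  have := hμ {(0, z1), (0, z2)} (fun p => if p.2 = z1 then v1 else v2)
  have hc : ({(0, z1), (0, z2)} : Finset (ℕ × ℤ)).card = 2 := by
    rw [Finset.card_insert_of_notMem (by simp [h]), Finset.card_singleton]
  rw [hc] at this
  have hs : {ω : ℕ → ℤ → Bool | ∀ p ∈ ({(0, z1), (0, z2)} : Finset (ℕ × ℤ)),
      ω p.1 p.2 = (if p.2 = z1 then v1 else v2)} = {ω | ω 0 z1 = v1 ∧ ω 0 z2 = v2} := by
    ext ω; simp [h, Ne.symm h]
  rw [hs] at this
  rw [this, one_div, ← ENNReal.inv_pow]; norm_num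

lemma cyl3 (hμ : IIDCoins μ) {z1 z2 z3 : ℤ} (h12 : z1 ≠ z2) (h13 : z1 ≠ z3) (h23 : z2 ≠ z3)
    (v1 v2 v3 : Bool) :
    μ {ω | ω 0 z1 = v1 ∧ ω 0 z2 = v2 ∧ ω 0 z3 = v3} = 1 / 8 := by
  have := hμ {(0, z1), (0, z2), (0, z3)}
    (fun p => if p.2 = z1 then v1 else if p.2 = z2 then v2 else v3)
  have hc : ({(0, z1), (0, z2), (0, z3)} : Finset (ℕ × ℤ)).card = 3 := by
    rw [Finset.card_insert_of_notMem (by simp [h12, h13]),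
      Finset.card_insert_of_notMem (by simp [h23]), Finset.card_singleton]
  rw [hc] at this
  have hs : {ω : ℕ → ℤ → Bool | ∀ p ∈ ({(0, z1), (0, z2), (0, z3)} : Finset (ℕ × ℤ)),
      ω p.1 p.2 = (if p.2 = z1 then v1 else if p.2 = z2 then v2 else v3)}
      = {ω | ω 0 z1 = v1 ∧ ω 0 z2 = v2 ∧ ω 0 z3 = v3} := by
    ext ω; simp [h12, Ne.symm h12, h13, Ne.symm h13, h23, Ne.symm h23]
  rw [hs] at this
  rw [this, one_div, ← ENNReal.inv_pow]; norm_num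

lemma d24 : (1:ℝ≥0∞)/2 = 2/4 := by
  rw [ENNReal.div_eq_div_iff (by norm_num) (by norm_num) (by norm_num) (by norm_num)]; norm_num

lemma d28 : (1:ℝ≥0∞)/4 = 2/8 := by
  rw [ENNReal.div_eq_div_iff (by norm_num) (by norm_num) (by norm_num) (by norm_num)]; norm_num

lemma d48 : (1:ℝ≥0∞)/2 = 4/8 := by
  rw [ENNReal.div_eq_div_iff (by norm_num) (by norm_num) (by norm_num) (by norm_num)]; norm_num

lemma arith1 : (1/4:ℝ≥0∞) + (1/8 + 1/8) = 1/2 := by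
  rw [d28, d48, ENNReal.div_add_div_same, ENNReal.div_add_div_same]; norm_num

lemma arith2 : (1/2:ℝ≥0∞) + 1/4 = 3/4 := by
  rw [d24, ENNReal.div_add_div_same]; norm_num

lemma le14_34 : (1/4:ℝ≥0∞) ≤ 3/4 := by
  rw [d28]
  rw [show (3:ℝ≥0∞)/4 = 6/8 by
    rw [ENNReal.div_eq_div_iff (by norm_num) (by norm_num) (by norm_num) (by norm_num)]; norm_num]
  exact ENNReal.div_le_div (by norm_num) le_rfl

lemma le14_12 : (1/4:ℝ≥0∞) ≤ 1/2 := by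
  rw [d28, d48]
  exact ENNReal.div_le_div (by norm_num) le_rfl

lemma evolve_one (η : Config) : {ω : ℕ → ℤ → Bool | Unstable (evolve ω η 1) 0}
    = {ω | Unstable (update η (ω 0)) 0} := rfl


variable {μ : Measure (ℕ → ℤ → Bool)}

lemma case00_eq (hμ : IIDCoins μ) (η : Config) (hw : SWindow η 0 0) :
    μ {ω | Unstable (evolve ω η 1) 0} = 1/2 := by
  have hS0 : ¬ Unstable η 0 := hw.1 0 (by decide) (by decide)
  have hUm1 : Unstable η (-1) := by
    have := hw.2.1 0 (by norm_num)
    norm_num at this; exact this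
  have hU1 : Unstable η 1 := by
    have := hw.2.2 0 (by norm_num)
    norm_num at this; exact this
  have hL : η (-3) = η (-2) ∧ η (-2) = η (-1) := by
    have h1 := hUm1; have h0 := hS0
    rw [Unstable] at h1 h0; norm_num at h1 h0; tauto
  have hR : η 1 = η 2 ∧ η 2 = η 3 := by
    have h1 := hU1; have h0 := hS0
    rw [Unstable] at h1 h0; norm_num at h1 h0; tauto
  have hUm2 : Unstable η (-2) := by rw [Unstable]; norm_num; tauto
  have hU2 : Unstable η 2 := by rw [Unstable]; norm_num; tauto
  rw [evolve_one]
  have hE : {ω : ℕ → ℤ → Bool | Unstable (update η (ω 0)) 0} =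
      ({ω | ω 0 (-1) = η 0 ∧ ω 0 (-2) = η 0} ∪
       ({ω | ω 0 (-1) = η 0 ∧ ω 0 (-2) = !(η 0) ∧ ω 0 1 = η 0} ∪
        {ω | ω 0 (-1) = !(η 0) ∧ ω 0 1 = η 0 ∧ ω 0 2 = η 0})) := by
    ext ω
    simp only [Set.mem_union, Set.mem_setOf_eq]
    rw [Unstable]
    simp only [update]
    norm_num
    rw [if_pos hUm2, if_pos hUm1, if_neg hS0, if_pos hU1, if_pos hU2]
    generalize ω 0 (-2) = a
    generalize ω 0 (-1) = b
    generalize ω 0 1 = c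
    generalize ω 0 2 = d
    generalize η 0 = h
    revert a b c d h
    decide
  rw [hE]
  rw [measure_union ?hd1 ((meas3 _ _ _ _ _ _).union (meas3 _ _ _ _ _ _)),
    measure_union ?hd2 (meas3 _ _ _ _ _ _)]
  · rw [cyl2 hμ (by norm_num), cyl3 hμ (by norm_num) (by norm_num) (by norm_num),
      cyl3 hμ (by norm_num) (by norm_num) (by norm_num)]
    exact arith1
  case hd1 =>
    rw [Set.disjoint_left]
    rintro ω ⟨hb, ha⟩ (⟨hb', ha', _⟩ | ⟨hb', _, _⟩) <;> simp_all
  case hd2 =>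
    rw [Set.disjoint_left]
    rintro ω ⟨hb, _, _⟩ ⟨hb', _, _⟩ <;> simp_all

lemma case01_eq (hμ : IIDCoins μ) (η : Config) (hw : SWindow η 0 1) (heq : η 0 = η 1) :
    μ {ω | Unstable (evolve ω η 1) 0} = 3/4 := by
  have hS0 : ¬ Unstable η 0 := hw.1 0 (by decide) (by decide)
  have hS1 : ¬ Unstable η 1 := hw.1 1 (by decide) (by decide)
  have hUm1 : Unstable η (-1) := by
    have := hw.2.1 0 (by norm_num)
    norm_num at this; exact this
  have hU2 : Unstable η 2 := by
    have := hw.2.2 1 (by norm_num)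
    norm_num at this; exact this
  have hL : η (-3) = η (-2) ∧ η (-2) = η (-1) := by
    have h1 := hUm1; have h0 := hS0
    rw [Unstable] at h1 h0; norm_num at h1 h0; tauto
  have hUm2 : Unstable η (-2) := by rw [Unstable]; norm_num; tauto
  rw [evolve_one]
  have hE : {ω : ℕ → ℤ → Bool | Unstable (update η (ω 0)) 0} =
      ({ω | ω 0 (-1) = η 0} ∪ {ω | ω 0 (-1) = !(η 0) ∧ ω 0 2 = η 0}) := by
    ext ω
    simp only [Set.mem_union, Set.mem_setOf_eq]
    rw [Unstable]
    simp only [update]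
    norm_num
    rw [if_pos hUm2, if_pos hUm1, if_neg hS0, if_neg hS1, if_pos hU2]
    rw [← heq]
    generalize ω 0 (-2) = a
    generalize ω 0 (-1) = b
    generalize ω 0 2 = d
    generalize η 0 = h
    revert a b d h
    decide
  rw [hE, measure_union ?hd (meas2 _ _ _ _), cyl1 hμ, cyl2 hμ (by norm_num)]
  · exact arith2
  case hd =>
    rw [Set.disjoint_left]
    rintro ω hb ⟨hb', _⟩; simp_all

lemma case01_le (hμ : IIDCoins μ) (η : Config) (hw : SWindow η 0 1) :
    μ {ω | Unstable (evolve ω η 1) 0} ≤ 3/4 := by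
  by_cases heq : η 0 = η 1
  · exact (case01_eq hμ η hw heq).le
  · have hS0 : ¬ Unstable η 0 := hw.1 0 (by decide) (by decide)
    have hS1 : ¬ Unstable η 1 := hw.1 1 (by decide) (by decide)
    have hUm1 : Unstable η (-1) := by
      have := hw.2.1 0 (by norm_num)
      norm_num at this; exact this
    have hU2 : Unstable η 2 := by
      have := hw.2.2 1 (by norm_num)
      norm_num at this; exact this
    have hL : η (-3) = η (-2) ∧ η (-2) = η (-1) := by
      have h1 := hUm1; have h0 := hS0
      rw [Unstable] at h1 h0; norm_num at h1 h0; tauto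
    have hUm2 : Unstable η (-2) := by rw [Unstable]; norm_num; tauto
    rw [evolve_one]
    have hE : {ω : ℕ → ℤ → Bool | Unstable (update η (ω 0)) 0} =
        {ω | ω 0 (-2) = η 0 ∧ ω 0 (-1) = η 0} := by
      ext ω
      simp only [Set.mem_setOf_eq]
      rw [Unstable]
      simp only [update]
      norm_num
      rw [if_pos hUm2, if_pos hUm1, if_neg hS0, if_neg hS1, if_pos hU2]
      generalize ω 0 (-2) = a
      generalize ω 0 (-1) = b
      generalize ω 0 2 = d
      generalize hh : η 0 = h at heq ⊢
      generalize hh' : η 1 = h' at heq ⊢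
      clear hh hh'
      revert heq
      revert a b d h h'
      decide
    rw [hE, cyl2 hμ (by norm_num)]
    exact le14_34

lemma case02_eq (hμ : IIDCoins μ) (η : Config) (hw : SWindow η 0 2) (heq : η 0 = η 1) :
    μ {ω | Unstable (evolve ω η 1) 0} = 1/2 := by
  have hS0 : ¬ Unstable η 0 := hw.1 0 (by decide) (by decide)
  have hS1 : ¬ Unstable η 1 := hw.1 1 (by decide) (by decide)
  have hS2 : ¬ Unstable η 2 := hw.1 2 (by decide) (by decide)
  have hUm1 : Unstable η (-1) := by
    have := hw.2.1 0 (by norm_num)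
    norm_num at this; exact this
  have hL : η (-3) = η (-2) ∧ η (-2) = η (-1) := by
    have h1 := hUm1; have h0 := hS0
    rw [Unstable] at h1 h0; norm_num at h1 h0; tauto
  have hUm2 : Unstable η (-2) := by rw [Unstable]; norm_num; tauto
  have hn3 : ¬ (η 0 = η 1 ∧ η 1 = η 2) := by
    have h0 := hS0; rw [Unstable] at h0; norm_num at h0; tauto
  rw [evolve_one]
  have hE : {ω : ℕ → ℤ → Bool | Unstable (update η (ω 0)) 0} =
      {ω | ω 0 (-1) = η 0} := by
    ext ω
    simp only [Set.mem_setOf_eq]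
    rw [Unstable]
    simp only [update]
    norm_num
    rw [if_pos hUm2, if_pos hUm1, if_neg hS0, if_neg hS1, if_neg hS2]
    generalize ω 0 (-2) = a
    generalize ω 0 (-1) = b
    generalize hh : η 0 = h at heq hn3 ⊢
    generalize hh' : η 1 = h' at heq hn3 ⊢
    generalize hh'' : η 2 = h'' at hn3 ⊢
    clear hh hh' hh''
    revert heq hn3
    revert a b h h' h''
    decide
  rw [hE, cyl1 hμ]

lemma case02_le (hμ : IIDCoins μ) (η : Config) (hw : SWindow η 0 2) :
    μ {ω | Unstable (evolve ω η 1) 0} ≤ 1/2 := by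
  by_cases heq : η 0 = η 1
  · exact (case02_eq hμ η hw heq).le
  · have hS0 : ¬ Unstable η 0 := hw.1 0 (by decide) (by decide)
    have hS1 : ¬ Unstable η 1 := hw.1 1 (by decide) (by decide)
    have hS2 : ¬ Unstable η 2 := hw.1 2 (by decide) (by decide)
    have hUm1 : Unstable η (-1) := by
      have := hw.2.1 0 (by norm_num)
      norm_num at this; exact this
    have hL : η (-3) = η (-2) ∧ η (-2) = η (-1) := by
      have h1 := hUm1; have h0 := hS0
      rw [Unstable] at h1 h0; norm_num at h1 h0; tauto
    have hUm2 : Unstable η (-2) := by rw [Unstable]; norm_num; tauto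
    rw [evolve_one]
    have hE : {ω : ℕ → ℤ → Bool | Unstable (update η (ω 0)) 0} =
        {ω | ω 0 (-2) = η 0 ∧ ω 0 (-1) = η 0} := by
      ext ω
      simp only [Set.mem_setOf_eq]
      rw [Unstable]
      simp only [update]
      norm_num
      rw [if_pos hUm2, if_pos hUm1, if_neg hS0, if_neg hS1, if_neg hS2]
      generalize ω 0 (-2) = a
      generalize ω 0 (-1) = b
      generalize hh : η 0 = h at heq ⊢
      generalize hh' : η 1 = h' at heq ⊢
      generalize η 2 = h''
      clear hh hh'
      revert heq
      revert a b h h' h''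
      decide
    rw [hE, cyl2 hμ (by norm_num)]
    exact le14_12

lemma case11_eqA (hμ : IIDCoins μ) (η : Config) (hw : SWindow η 1 1) (hA : η (-1) = η 0) :
    μ {ω | Unstable (evolve ω η 1) 0} = 1/2 := by
  have hSm1 : ¬ Unstable η (-1) := hw.1 (-1) (by decide) (by decide)
  have hS0 : ¬ Unstable η 0 := hw.1 0 (by decide) (by decide)
  have hS1 : ¬ Unstable η 1 := hw.1 1 (by decide) (by decide)
  have hUm2 : Unstable η (-2) := by
    have := hw.2.1 1 (by norm_num)
    norm_num at this; exact this
  have hU2 : Unstable η 2 := by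
    have := hw.2.2 1 (by norm_num)
    norm_num at this; exact this
  have hn : ¬ (η (-1) = η 0 ∧ η 0 = η 1) := by
    have h0 := hS0; rw [Unstable] at h0; norm_num at h0; tauto
  rw [evolve_one]
  have hE : {ω : ℕ → ℤ → Bool | Unstable (update η (ω 0)) 0} =
      {ω | ω 0 (-2) = η (-1)} := by
    ext ω
    simp only [Set.mem_setOf_eq]
    rw [Unstable]
    simp only [update]
    norm_num
    rw [if_pos hUm2, if_neg hSm1, if_neg hS0, if_neg hS1, if_pos hU2]
    generalize ω 0 (-2) = a
    generalize ω 0 2 = d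
    generalize hg : η (-1) = g at hA hn ⊢
    generalize hh : η 0 = h at hA hn ⊢
    generalize hh' : η 1 = h' at hn ⊢
    clear hg hh hh'
    revert hA hn
    revert a d g h h'
    decide
  rw [hE, cyl1 hμ]

lemma case11_le (hμ : IIDCoins μ) (η : Config) (hw : SWindow η 1 1) :
    μ {ω | Unstable (evolve ω η 1) 0} ≤ 1/2 := by
  by_cases hA : η (-1) = η 0
  · exact (case11_eqA hμ η hw hA).le
  have hSm1 : ¬ Unstable η (-1) := hw.1 (-1) (by decide) (by decide)
  have hS0 : ¬ Unstable η 0 := hw.1 0 (by decide) (by decide)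
  have hS1 : ¬ Unstable η 1 := hw.1 1 (by decide) (by decide)
  have hUm2 : Unstable η (-2) := by
    have := hw.2.1 1 (by norm_num)
    norm_num at this; exact this
  have hU2 : Unstable η 2 := by
    have := hw.2.2 1 (by norm_num)
    norm_num at this; exact this
  rw [evolve_one]
  by_cases hB : η 0 = η 1
  · have hE : {ω : ℕ → ℤ → Bool | Unstable (update η (ω 0)) 0} =
        {ω | ω 0 2 = η 1} := by
      ext ω
      simp only [Set.mem_setOf_eq]
      rw [Unstable]
      simp only [update]
      norm_num
      rw [if_pos hUm2, if_neg hSm1, if_neg hS0, if_neg hS1, if_pos hU2]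
      generalize ω 0 (-2) = a
      generalize ω 0 2 = d
      generalize hg : η (-1) = g at hA ⊢
      generalize hh : η 0 = h at hA hB ⊢
      generalize hh' : η 1 = h' at hB ⊢
      clear hg hh hh'
      revert hA hB
      revert a d g h h'
      decide
    rw [hE, cyl1 hμ]
  · have hE : {ω : ℕ → ℤ → Bool | Unstable (update η (ω 0)) 0} = ∅ := by
      ext ω
      simp only [Set.mem_setOf_eq, Set.mem_empty_iff_false, iff_false]
      rw [Unstable]
      simp only [update]
      norm_num
      rw [if_pos hUm2, if_neg hSm1, if_neg hS0, if_neg hS1, if_pos hU2]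
      generalize ω 0 (-2) = a
      generalize ω 0 2 = d
      generalize hg : η (-1) = g at hA ⊢
      generalize hh : η 0 = h at hA hB ⊢
      generalize hh' : η 1 = h' at hB ⊢
      clear hg hh hh'
      revert hA hB
      revert a d g h h'
      decide
    rw [hE]
    simp

lemma case12_eq (hμ : IIDCoins μ) (η : Config) (hw : SWindow η 1 2) (hA : η (-1) = η 0) :
    μ {ω | Unstable (evolve ω η 1) 0} = 1/2 := by
  have hSm1 : ¬ Unstable η (-1) := hw.1 (-1) (by decide) (by decide)
  have hS0 : ¬ Unstable η 0 := hw.1 0 (by decide) (by decide)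
  have hS1 : ¬ Unstable η 1 := hw.1 1 (by decide) (by decide)
  have hS2 : ¬ Unstable η 2 := hw.1 2 (by decide) (by decide)
  have hUm2 : Unstable η (-2) := by
    have := hw.2.1 1 (by norm_num)
    norm_num at this; exact this
  have hn : ¬ (η (-1) = η 0 ∧ η 0 = η 1) := by
    have h0 := hS0; rw [Unstable] at h0; norm_num at h0; tauto
  have hn3 : ¬ (η 0 = η 1 ∧ η 1 = η 2) := by
    have h0 := hS0; rw [Unstable] at h0; norm_num at h0; tauto
  rw [evolve_one]
  have hE : {ω : ℕ → ℤ → Bool | Unstable (update η (ω 0)) 0} =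
      {ω | ω 0 (-2) = η (-1)} := by
    ext ω
    simp only [Set.mem_setOf_eq]
    rw [Unstable]
    simp only [update]
    norm_num
    rw [if_pos hUm2, if_neg hSm1, if_neg hS0, if_neg hS1, if_neg hS2]
    generalize ω 0 (-2) = a
    generalize hg : η (-1) = g at hA hn ⊢
    generalize hh : η 0 = h at hA hn hn3 ⊢
    generalize hh' : η 1 = h' at hn hn3 ⊢
    generalize hh'' : η 2 = h'' at hn3 ⊢
    clear hg hh hh' hh''
    revert hA hn hn3
    revert a g h h' h''
    decide
  rw [hE, cyl1 hμ]

lemma case12_le (hμ : IIDCoins μ) (η : Config) (hw : SWindow η 1 2) :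
    μ {ω | Unstable (evolve ω η 1) 0} ≤ 1/2 := by
  by_cases hA : η (-1) = η 0
  · exact (case12_eq hμ η hw hA).le
  have hSm1 : ¬ Unstable η (-1) := hw.1 (-1) (by decide) (by decide)
  have hS0 : ¬ Unstable η 0 := hw.1 0 (by decide) (by decide)
  have hS1 : ¬ Unstable η 1 := hw.1 1 (by decide) (by decide)
  have hS2 : ¬ Unstable η 2 := hw.1 2 (by decide) (by decide)
  have hUm2 : Unstable η (-2) := by
    have := hw.2.1 1 (by norm_num)
    norm_num at this; exact this
  have hn3 : ¬ (η 0 = η 1 ∧ η 1 = η 2) := by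
    have h0 := hS0; rw [Unstable] at h0; norm_num at h0; tauto
  rw [evolve_one]
  have hE : {ω : ℕ → ℤ → Bool | Unstable (update η (ω 0)) 0} = ∅ := by
    ext ω
    simp only [Set.mem_setOf_eq, Set.mem_empty_iff_false, iff_false]
    rw [Unstable]
    simp only [update]
    norm_num
    rw [if_pos hUm2, if_neg hSm1, if_neg hS0, if_neg hS1, if_neg hS2]
    generalize ω 0 (-2) = a
    generalize hg : η (-1) = g at hA ⊢
    generalize hh : η 0 = h at hA hn3 ⊢
    generalize hh' : η 1 = h' at hn3 ⊢
    generalize hh'' : η 2 = h'' at hn3 ⊢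
    clear hg hh hh' hh''
    revert hA hn3
    revert a g h h' h''
    decide
  rw [hE]
  simp

lemma case22' (η : Config) (hw : SWindow η 2 2) :
    μ {ω : ℕ → ℤ → Bool | Unstable (evolve ω η 1) 0} = 0 := by
  have hSm2 : ¬ Unstable η (-2) := hw.1 (-2) (by decide) (by decide)
  have hSm1 : ¬ Unstable η (-1) := hw.1 (-1) (by decide) (by decide)
  have hS0 : ¬ Unstable η 0 := hw.1 0 (by decide) (by decide)
  have hS1 : ¬ Unstable η 1 := hw.1 1 (by decide) (by decide)
  have hS2 : ¬ Unstable η 2 := hw.1 2 (by decide) (by decide)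
  rw [evolve_one]
  have : {ω : ℕ → ℤ → Bool | Unstable (update η (ω 0)) 0} = ∅ := by
    ext ω
    simp only [Set.mem_setOf_eq, Set.mem_empty_iff_false, iff_false]
    intro hU
    apply hS0
    rw [Unstable] at hU ⊢
    simp only [update] at hU
    norm_num at hU ⊢
    rw [if_neg hSm2, if_neg hSm1, if_neg hS0, if_neg hS1, if_neg hS2] at hU
    exact hU
  rw [this]; exact measure_empty

def eta00 : Config := fun x => decide (x = 0)
def eta01 : Config := fun x => decide (x = 0 ∨ x = 1)
def eta02 : Config := fun x => decide (x = 0 ∨ x = 1 ∨ 3 ≤ x)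
def eta11 : Config := fun x => decide (x = -1 ∨ x = 0 ∨ 2 ≤ x)
def eta12 : Config := fun x => decide (x = -1 ∨ x = 0 ∨ x = 2)

lemma win00 : SWindow eta00 0 0 := by
  refine ⟨?_, ?_, ?_⟩
  · intro i h1 h2
    have l1 : (-i).toNat ≤ 0 := by exact_mod_cast h1
    have l2 : i.toNat ≤ 0 := by exact_mod_cast h2
    have hl : 0 ≤ i := by omega
    have hr : i ≤ 0 := by omega
    interval_cases i <;> decide
  · intro nn hnn
    have : nn = 0 := by exact_mod_cast hnn.symm
    subst this; decide
  · intro mm hmm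
    have : mm = 0 := by exact_mod_cast hmm.symm
    subst this; decide

lemma win01 : SWindow eta01 0 1 := by
  refine ⟨?_, ?_, ?_⟩
  · intro i h1 h2
    have l1 : (-i).toNat ≤ 0 := by exact_mod_cast h1
    have l2 : i.toNat ≤ 1 := by exact_mod_cast h2
    have hl : 0 ≤ i := by omega
    have hr : i ≤ 1 := by omega
    interval_cases i <;> decide
  · intro nn hnn
    have : nn = 0 := by exact_mod_cast hnn.symm
    subst this; decide
  · intro mm hmm
    have : mm = 1 := by exact_mod_cast hmm.symm
    subst this; decide

lemma win02 : SWindow eta02 0 2 := by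
  refine ⟨?_, ?_, ?_⟩
  · intro i h1 h2
    have l1 : (-i).toNat ≤ 0 := by exact_mod_cast h1
    have l2 : i.toNat ≤ 2 := by exact_mod_cast h2
    have hl : 0 ≤ i := by omega
    have hr : i ≤ 2 := by omega
    interval_cases i <;> decide
  · intro nn hnn
    have : nn = 0 := by exact_mod_cast hnn.symm
    subst this; decide
  · intro mm hmm
    have : mm = 2 := by exact_mod_cast hmm.symm
    subst this; decide

lemma win11 : SWindow eta11 1 1 := by
  refine ⟨?_, ?_, ?_⟩
  · intro i h1 h2
    have l1 : (-i).toNat ≤ 1 := by exact_mod_cast h1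
    have l2 : i.toNat ≤ 1 := by exact_mod_cast h2
    have hl : -1 ≤ i := by omega
    have hr : i ≤ 1 := by omega
    interval_cases i <;> decide
  · intro nn hnn
    have : nn = 1 := by exact_mod_cast hnn.symm
    subst this; decide
  · intro mm hmm
    have : mm = 1 := by exact_mod_cast hmm.symm
    subst this; decide

lemma win12 : SWindow eta12 1 2 := by
  refine ⟨?_, ?_, ?_⟩
  · intro i h1 h2
    have l1 : (-i).toNat ≤ 1 := by exact_mod_cast h1
    have l2 : i.toNat ≤ 2 := by exact_mod_cast h2
    have hl : -1 ≤ i := by omega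
    have hr : i ≤ 2 := by omega
    interval_cases i <;> decide
  · intro nn hnn
    have : nn = 1 := by exact_mod_cast hnn.symm
    subst this; decide
  · intro mm hmm
    have : mm = 2 := by exact_mod_cast hmm.symm
    subst this; decide

/-- the values of `p_1^S(n, m)` for `0 ≤ n ≤ m ≤ 2`. -/
theorem p1S_values (μ : Measure (ℕ → ℤ → Bool)) [IsProbabilityMeasure μ]
    (hμ : IIDCoins μ) :
    pS μ 1 0 0 = 1 / 2 ∧ pS μ 1 0 1 = 3 / 4 ∧ pS μ 1 0 2 = 1 / 2 ∧
    pS μ 1 1 1 = 1 / 2 ∧ pS μ 1 1 2 = 1 / 2 ∧ pS μ 1 2 2 = 0 := by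
  refine ⟨?_, ?_, ?_, ?_, ?_, ?_⟩
  · apply le_antisymm
    · exact iSup₂_le fun η hw => (case00_eq hμ η hw).le
    · calc (1/2 : ℝ≥0∞) = μ {ω | Unstable (evolve ω eta00 1) 0} := (case00_eq hμ eta00 win00).symm
        _ ≤ pS μ 1 0 0 := le_iSup₂ (f := fun η (_ : SWindow η 0 0) =>
            μ {ω | Unstable (evolve ω η 1) 0}) eta00 win00
  · apply le_antisymm
    · exact iSup₂_le fun η hw => case01_le hμ η hw
    · calc (3/4 : ℝ≥0∞) = μ {ω | Unstable (evolve ω eta01 1) 0} :=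
            (case01_eq hμ eta01 win01 (by decide)).symm
        _ ≤ pS μ 1 0 1 := le_iSup₂ (f := fun η (_ : SWindow η 0 1) =>
            μ {ω | Unstable (evolve ω η 1) 0}) eta01 win01
  · apply le_antisymm
    · exact iSup₂_le fun η hw => case02_le hμ η hw
    · calc (1/2 : ℝ≥0∞) = μ {ω | Unstable (evolve ω eta02 1) 0} :=
            (case02_eq hμ eta02 win02 (by decide)).symm
        _ ≤ pS μ 1 0 2 := le_iSup₂ (f := fun η (_ : SWindow η 0 2) =>
            μ {ω | Unstable (evolve ω η 1) 0}) eta02 win02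
  · apply le_antisymm
    · exact iSup₂_le fun η hw => case11_le hμ η hw
    · calc (1/2 : ℝ≥0∞) = μ {ω | Unstable (evolve ω eta11 1) 0} :=
            (case11_eqA hμ eta11 win11 (by decide)).symm
        _ ≤ pS μ 1 1 1 := le_iSup₂ (f := fun η (_ : SWindow η 1 1) =>
            μ {ω | Unstable (evolve ω η 1) 0}) eta11 win11
  · apply le_antisymm
    · exact iSup₂_le fun η hw => case12_le hμ η hw
    · calc (1/2 : ℝ≥0∞) = μ {ω | Unstable (evolve ω eta12 1) 0} :=
            (case12_eq hμ eta12 win12 (by decide)).symm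
        _ ≤ pS μ 1 1 2 := le_iSup₂ (f := fun η (_ : SWindow η 1 2) =>
            μ {ω | Unstable (evolve ω η 1) 0}) eta12 win12
  · apply le_antisymm
    · exact iSup₂_le fun η hw => (case22' η hw).le
    · exact zero_le
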